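/- Let φ : 𝔻 → 𝔻 be a non-constant analytic function belonging to A⁺(𝕋) such that the composition operator C_φ (f ↦ f∘φ) maps A⁺(𝕋) into itself (equivalently, sup_{n≥1} ‖φⁿ‖_{A⁺(𝕋)} < ∞). Then C_φ : A⁺(𝕋) → A⁺(𝕋) is a compact operator if and only if sup_{z∈𝔻} |φ(z)| < 1; equivalently, if and only if ‖φⁿ‖_{A⁺(𝕋)} → 0 as n → ∞. -/

import Mathlib

open Complex Filter Metric
open scoped ENNReal Topology

noncomputable section

/-- The Banach space `ℓ¹(ℕ₀)` of Taylor coefficient sequences, modelling the Wiener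
algebra `A⁺(𝕋)` of absolutely convergent Taylor series (the sequence `a` corresponds to
the function `z ↦ ∑ a n zⁿ`, and the `A⁺`-norm is the `ℓ¹`-norm). -/
abbrev l1N := lp (fun _ : ℕ => ℂ) 1

namespace S0

lemma summable_coe (a : l1N) : Summable fun k => ‖a k‖ := by
  have h := (lp.memℓp a).summable (p := 1) (by norm_num)
  simpa using h

lemma norm_eq (a : l1N) : ‖a‖ = ∑' k, ‖a k‖ := by
  rw [lp.norm_eq_tsum_rpow (by norm_num) a]
  simp

lemma summable_mul_pow (a : l1N) {z : ℂ} (hz : ‖z‖ ≤ 1) :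
    Summable fun k => a k * z ^ k := by
  apply Summable.of_norm
  refine Summable.of_nonneg_of_le (fun k => norm_nonneg _) (fun k => ?_) (summable_coe a)
  rw [norm_mul, norm_pow]
  exact mul_le_of_le_one_right (norm_nonneg _) (pow_le_one₀ (norm_nonneg _) hz)

lemma norm_tsum_mul_pow_le (a : l1N) {z : ℂ} (hz : ‖z‖ ≤ 1) :
    ‖∑' k, a k * z ^ k‖ ≤ ‖a‖ := by
  refine (norm_tsum_le_tsum_norm ((summable_mul_pow a hz).norm)).trans ?_
  rw [norm_eq]
  refine Summable.tsum_le_tsum (fun k => ?_) (summable_mul_pow a hz).norm (summable_coe a)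
  rw [norm_mul, norm_pow]
  exact mul_le_of_le_one_right (norm_nonneg _) (pow_le_one₀ (norm_nonneg _) hz)

/-- Evaluation at a point of the closed unit disk, as a continuous linear functional. -/
def evL (z : ℂ) (hz : ‖z‖ ≤ 1) : l1N →L[ℂ] ℂ :=
  LinearMap.mkContinuous
    { toFun := fun a => ∑' k, a k * z ^ k
      map_add' := by
        intro a b
        show (∑' k, ((a + b : l1N) k) * z ^ k) = (∑' k, a k * z ^ k) + ∑' k, b k * z ^ k
        have h : ∀ k, ((a + b : l1N) k) * z ^ k = a k * z ^ k + b k * z ^ k := by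
          intro k
          rw [lp.coeFn_add]
          simp [add_mul]
        rw [tsum_congr h, Summable.tsum_add (summable_mul_pow a hz) (summable_mul_pow b hz)]
      map_smul' := by
        intro c a
        show (∑' k, ((c • a : l1N) k) * z ^ k) = c • ∑' k, a k * z ^ k
        have h : ∀ k, ((c • a : l1N) k) * z ^ k = c * (a k * z ^ k) := by
          intro k
          rw [lp.coeFn_smul]
          simp [mul_assoc]
        rw [tsum_congr h, tsum_mul_left]
        rfl }
    1 (fun a => by simpa using norm_tsum_mul_pow_le a hz)

lemma evL_apply (z : ℂ) (hz : ‖z‖ ≤ 1) (a : l1N) :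
    evL z hz a = ∑' k, a k * z ^ k := rfl

lemma norm_evL_le (z : ℂ) (hz : ‖z‖ ≤ 1) (a : l1N) : ‖evL z hz a‖ ≤ ‖a‖ :=
  norm_tsum_mul_pow_le a hz

lemma eval_single (n : ℕ) (c z : ℂ) :
    (∑' k, (lp.single 1 n c : l1N) k * z ^ k) = c * z ^ n := by
  have h : (fun k => (lp.single 1 n c : l1N) k * z ^ k)
      = fun k => if k = n then c * z ^ n else 0 := by
    funext k
    by_cases hk : k = n
    · subst hk; simp [lp.single_apply_self]
    · rw [lp.single_apply_ne (E := fun _ : ℕ => ℂ) 1 n c hk, zero_mul]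
      simp [hk]
  rw [h, tsum_ite_eq]

lemma eq_zero_of_eval_zero (a : l1N)
    (h : ∀ z : ℂ, ‖z‖ < 1 → (∑' k, a k * z ^ k) = 0) : a = 0 := by
  set C := ∑' k, ‖a k‖ with hC
  have hC0 : 0 ≤ C := tsum_nonneg fun k => norm_nonneg _
  have key : ∀ n, a n = 0 := by
    intro n
    induction n using Nat.strong_induction_on with
    | _ n IH =>
    have hb : ∀ t : ℝ, 0 < t → t < 1 → ‖a n‖ ≤ t * C := by
      intro t ht0 ht1
      have hz1 : ‖(t : ℂ)‖ < 1 := by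
        rw [Complex.norm_real, Real.norm_eq_abs, abs_of_pos ht0]; exact ht1
      have hsum := summable_mul_pow a hz1.le
      have h0 := h (t : ℂ) hz1
      have hsplit := Summable.sum_add_tsum_nat_add (f := fun k => a k * (t : ℂ) ^ k) (n + 1) hsum
      rw [h0] at hsplit
      have hhead : (∑ k ∈ Finset.range (n + 1), a k * (t : ℂ) ^ k) = a n * (t : ℂ) ^ n := by
        refine Finset.sum_eq_single_of_mem n (Finset.self_mem_range_succ n) ?_
        intro k hk hkn
        have hkl : k < n := lt_of_le_of_ne (Nat.lt_succ_iff.mp (Finset.mem_range.mp hk)) hkn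
        rw [IH k hkl, zero_mul]
      rw [hhead] at hsplit
      have heq : a n * (t : ℂ) ^ n = -∑' k, a (k + (n + 1)) * (t : ℂ) ^ (k + (n + 1)) := by
        linear_combination hsplit
      have htail : Summable fun k => ‖a (k + (n + 1)) * (t : ℂ) ^ (k + (n + 1))‖ := by
        have := ((summable_nat_add_iff (n + 1)).mpr hsum).norm
        exact this
      have hb1 : ‖a n * (t : ℂ) ^ n‖ ≤ t ^ (n + 1) * C := by
        rw [heq, norm_neg]
        refine (norm_tsum_le_tsum_norm htail).trans ?_
        have hstep : ∀ k, ‖a (k + (n + 1)) * (t : ℂ) ^ (k + (n + 1))‖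
            ≤ ‖a (k + (n + 1))‖ * t ^ (n + 1) := by
          intro k
          rw [norm_mul, norm_pow, Complex.norm_real, Real.norm_eq_abs, abs_of_pos ht0]
          exact mul_le_mul_of_nonneg_left
            (pow_le_pow_of_le_one ht0.le ht1.le (by omega)) (norm_nonneg _)
        refine (Summable.tsum_le_tsum hstep htail ?_).trans ?_
        · exact ((summable_nat_add_iff (n + 1)).mpr (summable_coe a)).mul_right _
        · rw [tsum_mul_right]
          rw [mul_comm]
          refine mul_le_mul_of_nonneg_left ?_ (by positivity)
          have hsplit2 := Summable.sum_add_tsum_nat_add (f := fun k => ‖a k‖) (n + 1) (summable_coe a)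
          have hhead2 : 0 ≤ ∑ k ∈ Finset.range (n + 1), ‖a k‖ :=
            Finset.sum_nonneg fun _ _ => norm_nonneg _
          rw [hC]
          linarith
      have hnorm : ‖a n * (t : ℂ) ^ n‖ = ‖a n‖ * t ^ n := by
        rw [norm_mul, norm_pow, Complex.norm_real, Real.norm_eq_abs, abs_of_pos ht0]
      rw [hnorm, pow_succ, mul_comm (t ^ n) t] at hb1
      have htn : (0:ℝ) < t ^ n := pow_pos ht0 n
      have hmul : t ^ n * ‖a n‖ ≤ t ^ n * (t * C) := by linarith
      exact le_of_mul_le_mul_left hmul htn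
    have hzero : ‖a n‖ ≤ 0 := by
      refine le_of_forall_pos_le_add fun ε hε => ?_
      have ht0 : 0 < min (1/2 : ℝ) (ε / (C + 1)) := by positivity
      have ht1 : min (1/2 : ℝ) (ε / (C + 1)) < 1 :=
        lt_of_le_of_lt (min_le_left _ _) (by norm_num)
      refine (hb _ ht0 ht1).trans ?_
      have h2 : min (1/2 : ℝ) (ε / (C + 1)) * C ≤ (ε / (C + 1)) * C :=
        mul_le_mul_of_nonneg_right (min_le_right _ _) hC0
      refine h2.trans ?_
      rw [div_mul_eq_mul_div, div_le_iff₀ (by positivity)]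
      nlinarith
    simpa using le_antisymm hzero (norm_nonneg _)
  refine lp.eq_zero_iff_coeFn_eq_zero.mpr (funext fun n => ?_)
  simp [key n]

lemma eq_of_eval_eq (a b : l1N)
    (h : ∀ z : ℂ, ‖z‖ < 1 → (∑' k, a k * z ^ k) = ∑' k, b k * z ^ k) : a = b := by
  have h0 : a - b = 0 := by
    refine eq_zero_of_eval_zero _ fun z hz => ?_
    have hk : ∀ k, ((a - b : l1N) k) * z ^ k = a k * z ^ k - b k * z ^ k := by
      intro k; rw [lp.coeFn_sub]; simp [sub_mul]
    rw [tsum_congr hk, Summable.tsum_sub (summable_mul_pow a hz.le) (summable_mul_pow b hz.le),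
      h z hz, sub_self]
  have := sub_eq_zero.mp h0
  exact this

end S0

namespace S0

def shiftFun (a : ℕ → ℂ) : ℕ → ℂ := fun k => match k with
  | 0 => 0
  | (m+1) => a m

lemma summable_shift (a : l1N) : Summable fun k => ‖shiftFun (⇑a) k‖ :=
  (summable_nat_add_iff 1).mp (summable_coe a)

lemma memℓp_shift (a : l1N) : Memℓp (shiftFun (⇑a)) 1 :=
  memℓp_gen (by simpa using summable_shift a)

/-- The shift operator (multiplication by `z`) on `ℓ¹`. -/
def Sop : l1N →L[ℂ] l1N :=
  LinearMap.mkContinuous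
    { toFun := fun a => ⟨shiftFun ⇑a, memℓp_shift a⟩
      map_add' := by
        intro a b
        apply lp.ext
        funext k
        have h1 : ∀ (c d : l1N), ⇑(c + d) = ⇑c + ⇑d := lp.coeFn_add
        cases k with
        | zero => simp [shiftFun, h1]
        | succ m =>
          have : shiftFun (⇑(a + b)) (m+1) = shiftFun ⇑a (m+1) + shiftFun ⇑b (m+1) := by
            simp [shiftFun, h1]
          simpa [h1] using this
      map_smul' := by
        intro c a
        apply lp.ext
        funext k
        have h1 : ∀ (d : ℂ) (e : l1N), ⇑(d • e) = d • ⇑e := lp.coeFn_smul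
        cases k with
        | zero => simp [shiftFun, h1]
        | succ m =>
          have : shiftFun (⇑(c • a)) (m+1) = c * shiftFun ⇑a (m+1) := by
            simp [shiftFun, h1]
          simpa [h1] using this }
    1 (fun a => by
      have h : ‖(⟨shiftFun ⇑a, memℓp_shift a⟩ : l1N)‖ = ∑' k, ‖shiftFun (⇑a) k‖ := norm_eq _
      rw [one_mul]
      show ‖(⟨shiftFun ⇑a, memℓp_shift a⟩ : l1N)‖ ≤ ‖a‖
      rw [h, Summable.tsum_eq_zero_add (summable_shift a), norm_eq]
      simp [shiftFun])

lemma Sop_apply (a : l1N) : ⇑(Sop a) = shiftFun ⇑a := rfl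

lemma norm_Sop_le : ‖Sop‖ ≤ 1 := by
  refine ContinuousLinearMap.opNorm_le_bound _ zero_le_one fun a => ?_
  rw [one_mul]
  have h : ‖Sop a‖ = ∑' k, ‖shiftFun (⇑a) k‖ := by rw [norm_eq]; rfl
  rw [h, Summable.tsum_eq_zero_add (summable_shift a), norm_eq]
  simp [shiftFun]

lemma eval_Sop (a : l1N) (z : ℂ) (hz : ‖z‖ ≤ 1) :
    (∑' k, (Sop a) k * z ^ k) = z * ∑' k, a k * z ^ k := by
  have hs : Summable fun k => (Sop a) k * z ^ k := summable_mul_pow _ hz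
  rw [Summable.tsum_eq_zero_add hs]
  have h0 : (Sop a) 0 * z ^ 0 = 0 := by
    rw [Sop_apply]; simp [shiftFun]
  have h1 : ∀ k, (Sop a) (k + 1) * z ^ (k + 1) = z * (a k * z ^ k) := by
    intro k
    rw [Sop_apply]
    show a k * z ^ (k+1) = z * (a k * z ^ k)
    ring
  rw [h0, zero_add, tsum_congr h1, tsum_mul_left]

lemma eval_Sop_pow (n : ℕ) (a : l1N) (z : ℂ) (hz : ‖z‖ ≤ 1) :
    (∑' k, ((Sop ^ n) a) k * z ^ k) = z ^ n * ∑' k, a k * z ^ k := by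
  induction n generalizing a with
  | zero => simp [ContinuousLinearMap.one_apply]
  | succ m IH =>
    rw [pow_succ, ContinuousLinearMap.mul_apply, IH (Sop a), eval_Sop a z hz]
    ring

instance : Nontrivial l1N := by
  refine ⟨lp.single 1 0 1, 0, fun h => ?_⟩
  have := congrFun (congrArg (⇑) h) 0
  rw [lp.single_apply_self] at this
  simp at this

end S0

set_option synthInstance.maxHeartbeats 1000000
set_option maxHeartbeats 4000000

namespace S0

abbrev A := l1N →L[ℂ] l1N

instance : NormOneClass A :=
  ⟨by rw [ContinuousLinearMap.one_def]; exact ContinuousLinearMap.norm_id⟩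

noncomputable abbrev Wcal : Subalgebra ℂ A := Algebra.elemental ℂ Sop

noncomputable def Sel : ↥Wcal := ⟨Sop, Algebra.elemental.self_mem ℂ Sop⟩

noncomputable instance : NormedCommRing ↥Wcal :=
  { (inferInstance : NormedRing ↥Wcal) with mul_comm := mul_comm }

lemma norm_coe_Wcal (x : ↥Wcal) : ‖x‖ = ‖(x : A)‖ := rfl

lemma norm_one_Wcal : ‖(1 : ↥Wcal)‖ = 1 := by
  rw [norm_coe_Wcal, OneMemClass.coe_one, norm_one]

lemma norm_Sop_pow_le (n : ℕ) : ‖(Sop ^ n : A)‖ ≤ 1 := by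
  induction n with
  | zero => rw [pow_zero, norm_one]
  | succ m IH =>
    rw [pow_succ]
    exact le_trans (norm_mul_le _ _) (by nlinarith [norm_Sop_le, norm_nonneg (Sop ^ m : A)])

lemma norm_Sel_pow_le (n : ℕ) : ‖(Sel ^ n : ↥Wcal)‖ ≤ 1 := by
  rw [norm_coe_Wcal, SubmonoidClass.coe_pow]
  exact norm_Sop_pow_le n

section KeyC

variable {φ : ℂ → ℂ} {p : ℕ → ℂ}

lemma keyC (hp : Summable fun n => ‖p n‖)
    (hsum : ∀ z : ℂ, ‖z‖ < 1 → HasSum (fun n => p n * z ^ n) (φ z))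
    {r : ℝ} (hr0 : 0 ≤ r) (hr1 : r < 1)
    (hrb : ∀ z : ℂ, ‖z‖ < 1 → ‖φ z‖ ≤ r)
    (T : l1N →L[ℂ] l1N)
    (hT : ∀ n : ℕ, ∀ z : ℂ, ‖z‖ < 1 →
      (∑' k, (T (lp.single 1 n 1)) k * z ^ k) = φ z ^ n) :
    Tendsto (fun n : ℕ => ‖T (lp.single 1 n 1)‖) atTop (𝓝 0) := by
  -- the element Φ of the commutative Banach algebra 𝒜
  have hΦs : Summable fun n => p n • (Sel ^ n) := by
    apply Summable.of_norm
    refine Summable.of_nonneg_of_le (fun n => norm_nonneg _) (fun n => ?_) hp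
    rw [norm_coe_Wcal, show ((p n • Sel ^ n : ↥Wcal) : A) = p n • (Sop ^ n : A) from rfl, norm_smul]
    exact mul_le_of_le_one_right (norm_nonneg _) (norm_Sop_pow_le n)
  set Φel : ↥Wcal := ∑' n, p n • (Sel ^ n) with hΦel
  have hΦ : HasSum (fun n => p n • (Sel ^ n)) Φel := hΦs.hasSum
  set Φ₀ : A := ((Φel : ↥Wcal) : A) with hΦ₀def
  have hΦ₀ : HasSum (fun n => p n • ((Sop ^ n : A))) Φ₀ := by
    have h := hΦ.map (Wcal.val) continuous_subtype_val
    have he : ∀ n, Wcal.val (p n • (Sel ^ n)) = p n • ((Sop ^ n : A)) := by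
      intro n
      rw [map_smul, map_pow]
      rfl
    rw [show (fun n => p n • ((Sop ^ n : A))) = (Subtype.val ∘ fun n => p n • (Sel ^ n)) from
      funext fun n => (he n).symm]
    exact h
  -- evaluation identity for Φ₀
  have evΦ : ∀ (a : l1N) (z : ℂ) (hz : ‖z‖ < 1),
      (∑' k, (Φ₀ a) k * z ^ k) = φ z * ∑' k, a k * z ^ k := by
    intro a z hz
    have h1 : HasSum (fun n => (p n • (Sop ^ n : A)) a) (Φ₀ a) :=
      hΦ₀.map (ContinuousLinearMap.apply ℂ l1N a) (ContinuousLinearMap.apply ℂ l1N a).continuous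
    have h2 : HasSum (fun n => evL z hz.le ((p n • (Sop ^ n : A)) a)) (evL z hz.le (Φ₀ a)) :=
      h1.map (evL z hz.le) (evL z hz.le).continuous
    have h3 : ∀ n, evL z hz.le ((p n • (Sop ^ n : A)) a)
        = (p n * z ^ n) * (∑' k, a k * z ^ k) := by
      intro n
      rw [ContinuousLinearMap.smul_apply, map_smul, smul_eq_mul, evL_apply,
        eval_Sop_pow n a z hz.le]
      ring
    rw [funext h3] at h2
    have h4 := (hsum z hz).mul_right (∑' k, a k * z ^ k)
    exact h2.unique h4
  have evΦpow : ∀ (n : ℕ) (a : l1N) (z : ℂ) (hz : ‖z‖ < 1),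
      (∑' k, ((Φ₀ ^ n) a) k * z ^ k) = φ z ^ n * ∑' k, a k * z ^ k := by
    intro n
    induction n with
    | zero => intro a z hz; simp [ContinuousLinearMap.one_apply]
    | succ m IH =>
      intro a z hz
      rw [pow_succ, ContinuousLinearMap.mul_apply, IH (Φ₀ a) z hz, evΦ a z hz]
      ring
  -- identification of T δₙ with Φ₀ ^ n δ₀
  have hTδ : ∀ n : ℕ, T (lp.single 1 n 1) = (Φ₀ ^ n) (lp.single 1 0 1) := by
    intro n
    refine eq_of_eval_eq _ _ fun z hz => ?_
    rw [hT n z hz, evΦpow n _ z hz, eval_single 0 1 z]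
    simp
  -- norm bound
  have hnorm_le : ∀ n : ℕ, ‖T (lp.single 1 n 1)‖ ≤ ‖(Φel ^ n : ↥Wcal)‖ := by
    intro n
    rw [hTδ n]
    have h1 : ‖(lp.single 1 0 1 : l1N)‖ = 1 := by
      have := lp.norm_single (p := 1) (E := fun _ : ℕ => ℂ) (by norm_num) 0 (1 : ℂ)
      simpa using this
    calc ‖(Φ₀ ^ n) (lp.single 1 0 1)‖ ≤ ‖(Φ₀ ^ n : A)‖ * ‖(lp.single 1 0 1 : l1N)‖ :=
          ContinuousLinearMap.le_opNorm _ _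
      _ = ‖(Φ₀ ^ n : A)‖ := by rw [h1, mul_one]
      _ = ‖(Φel ^ n : ↥Wcal)‖ := by rw [norm_coe_Wcal, SubmonoidClass.coe_pow]
  -- character bound
  have hchar : ∀ χ : WeakDual.characterSpace ℂ ↥Wcal, ‖χ Φel‖ ≤ r := by
    intro χ
    set w : ℂ := χ Sel with hw
    have hw1 : ‖w‖ ≤ 1 := by
      have h := AlgHom.norm_apply_le_self_mul_norm_one χ Sel
      rw [norm_one_Wcal, mul_one] at h
      exact h.trans (by simpa using norm_Sel_pow_le 1)
    have hχΦ : HasSum (fun n => p n * w ^ n) (χ Φel) := by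
      have h := hΦ.map (WeakDual.CharacterSpace.toCLM χ) (WeakDual.CharacterSpace.toCLM χ).continuous
      have he : ∀ n, χ (p n • (Sel ^ n)) = p n * w ^ n := by
        intro n
        rw [map_smul, map_pow, smul_eq_mul]
      simpa [Function.comp_def, WeakDual.CharacterSpace.coe_toCLM, he] using h
    -- approach the boundary radially
    have hseq : Tendsto (fun j : ℕ => (((1 - 1/(j+1) : ℝ)) : ℂ) * w) atTop (𝓝 w) := by
      have h1 : Tendsto (fun j : ℕ => (1 - 1/(j+1) : ℝ)) atTop (𝓝 1) := by
        have := tendsto_one_div_add_atTop_nhds_zero_nat (𝕜 := ℝ)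
        have h2 := (tendsto_const_nhds (x := (1:ℝ)) (f := atTop (α := ℕ))).sub this
        simpa using h2
      have h2 : Tendsto (fun j : ℕ => (((1 - 1/(j+1) : ℝ)) : ℂ)) atTop (𝓝 1) := by
        have h2' := (Complex.continuous_ofReal.tendsto 1).comp h1
        simpa [Function.comp_def] using h2'
      have h3 := h2.mul_const w
      simpa using h3
    have hzj_mem : ∀ j : ℕ, ‖(((1 - 1/(j+1) : ℝ)) : ℂ) * w‖ < 1 := by
      intro j
      have h0 : (0:ℝ) ≤ 1 - 1/(j+1) := by
        have : (1:ℝ)/(j+1) ≤ 1 := by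
          rw [div_le_one (by positivity)]
          simp
        linarith
      have h1 : (1:ℝ) - 1/(j+1) < 1 := by
        have : (0:ℝ) < 1/(j+1) := by positivity
        linarith
      rw [norm_mul, Complex.norm_real, Real.norm_eq_abs, _root_.abs_of_nonneg h0]
      calc (1 - 1/(j+1:ℝ)) * ‖w‖ ≤ (1 - 1/(j+1:ℝ)) * 1 := by
            exact mul_le_mul_of_nonneg_left hw1 h0
        _ < 1 := by rw [mul_one]; exact h1
    have hconv : Tendsto (fun j : ℕ => ∑' n, p n * ((((1 - 1/(j+1) : ℝ)) : ℂ) * w) ^ n)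
        atTop (𝓝 (∑' n, p n * w ^ n)) := by
      refine tendsto_tsum_of_dominated_convergence hp (fun n => ?_) ?_
      · exact ((hseq.pow n).const_mul (p n))
      · refine Eventually.of_forall fun j => fun n => ?_
        rw [norm_mul, norm_pow]
        exact mul_le_of_le_one_right (norm_nonneg _)
          (pow_le_one₀ (norm_nonneg _) (hzj_mem j).le)
    have hval : ∀ j : ℕ, ‖∑' n, p n * ((((1 - 1/(j+1) : ℝ)) : ℂ) * w) ^ n‖ ≤ r := by
      intro j
      rw [(hsum _ (hzj_mem j)).tsum_eq]
      exact hrb _ (hzj_mem j)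
    have := le_of_tendsto hconv.norm (Eventually.of_forall hval)
    rwa [hχΦ.tsum_eq] at this
  -- spectral radius bound
  have hsr : spectralRadius ℂ Φel ≤ ENNReal.ofReal r := by
    refine iSup₂_le fun k hk => ?_
    obtain ⟨χ, hχ⟩ := (WeakDual.CharacterSpace.mem_spectrum_iff_exists (A := ↥Wcal) (a := Φel) (z := k)).mp hk
    rw [← hχ, ← ENNReal.ofReal_coe_nnreal, coe_nnnorm]
    exact ENNReal.ofReal_le_ofReal (hchar χ)
  -- Gelfand's formula
  have hG := spectrum.pow_nnnorm_pow_one_div_tendsto_nhds_spectralRadius Φel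
  set s : ℝ := (r + 1) / 2 with hs
  have hs0 : 0 < s := by positivity
  have hs1 : s < 1 := by simp only [hs]; linarith
  have hrs : ENNReal.ofReal r < ENNReal.ofReal s := by
    rw [ENNReal.ofReal_lt_ofReal_iff hs0]
    simp only [hs]; linarith
  have hev : ∀ᶠ n : ℕ in atTop, (‖(Φel ^ n : ↥Wcal)‖₊ : ℝ≥0∞) ^ (1 / (n:ℝ)) < ENNReal.ofReal s :=
    hG.eventually_lt_const (lt_of_le_of_lt hsr hrs)
  have hnorm : ∀ᶠ n in atTop, ‖(Φel ^ n : ↥Wcal)‖ ≤ s ^ n := by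
    filter_upwards [hev, eventually_ge_atTop 1] with n h hn1
    have hn0 : (n:ℝ) ≠ 0 := by positivity
    have h2 : ((‖(Φel ^ n : ↥Wcal)‖₊ : ℝ≥0∞) ^ (1 / (n:ℝ))) ^ (n:ℝ)
        < (ENNReal.ofReal s) ^ (n:ℝ) :=
      ENNReal.rpow_lt_rpow h (by positivity)
    rw [← ENNReal.rpow_mul, one_div, inv_mul_cancel₀ hn0, ENNReal.rpow_one] at h2
    rw [ENNReal.ofReal_rpow_of_pos hs0, Real.rpow_natCast] at h2
    rw [← ENNReal.ofReal_coe_nnreal, coe_nnnorm] at h2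
    have := (ENNReal.ofReal_lt_ofReal_iff_of_nonneg (norm_nonneg _)).mp h2
    exact this.le
  have hΦn : Tendsto (fun n : ℕ => ‖(Φel ^ n : ↥Wcal)‖) atTop (𝓝 0) :=
    squeeze_zero' (Eventually.of_forall fun n => norm_nonneg _) hnorm
      (tendsto_pow_atTop_nhds_zero_of_lt_one hs0.le hs1)
  exact squeeze_zero (fun n => norm_nonneg _) hnorm_le hΦn

end KeyC

end S0

namespace S0

lemma norm_single_one (n : ℕ) : ‖(lp.single 1 n 1 : l1N)‖ = 1 := by
  have := lp.norm_single (p := 1) (E := fun _ : ℕ => ℂ) (by norm_num) n (1 : ℂ)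
  simpa using this

section Keys

variable {φ : ℂ → ℂ} {T : l1N →L[ℂ] l1N}

/-- compact ⟹ the norms `‖T δₙ‖` tend to `0`. -/
lemma keyA (hmaps : ∀ z : ℂ, ‖z‖ < 1 → ‖φ z‖ < 1)
    (hT : ∀ n : ℕ, ∀ z : ℂ, ‖z‖ < 1 →
      (∑' k, (T (lp.single 1 n 1)) k * z ^ k) = φ z ^ n)
    (hc : IsCompactOperator ⇑T) :
    Tendsto (fun n : ℕ => ‖T (lp.single 1 n 1)‖) atTop (𝓝 0) := by
  rw [← tendsto_zero_iff_norm_tendsto_zero]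
  have hK : IsCompact (closure (⇑T '' closedBall 0 1)) :=
    IsCompactOperator.isCompact_closure_image_closedBall (f := (T : l1N →ₗ[ℂ] l1N)) hc 1
  have hmem : ∀ n : ℕ, T (lp.single 1 n 1) ∈ closure (⇑T '' closedBall 0 1) := by
    intro n
    refine subset_closure ⟨lp.single 1 n 1, ?_, rfl⟩
    rw [mem_closedBall_zero_iff, norm_single_one]
  refine tendsto_of_subseq_tendsto fun ns hns => ?_
  obtain ⟨x, hx, ms, hms, hlim⟩ := hK.tendsto_subseq (x := fun i => T (lp.single 1 (ns i) 1))
    (fun i => hmem (ns i))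
  have hx0 : x = 0 := by
    have hev : ∀ z : ℂ, ‖z‖ < 1 → (∑' k, x k * z ^ k) = 0 := by
      intro z hz
      have h1 : Tendsto (fun i => evL z hz.le (T (lp.single 1 (ns (ms i)) 1)))
          atTop (𝓝 (evL z hz.le x)) := ((evL z hz.le).continuous.tendsto x).comp hlim
      have h2 : ∀ i, evL z hz.le (T (lp.single 1 (ns (ms i)) 1)) = φ z ^ (ns (ms i)) := by
        intro i
        rw [evL_apply, hT _ z hz]
      rw [funext h2] at h1
      have h3 : Tendsto (fun i => ns (ms i)) atTop atTop :=
        hns.comp hms.tendsto_atTop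
      have h4 : Tendsto (fun i => φ z ^ (ns (ms i))) atTop (𝓝 0) :=
        (tendsto_pow_atTop_nhds_zero_of_norm_lt_one (hmaps z hz)).comp h3
      rw [evL_apply] at h1
      exact tendsto_nhds_unique h1 h4
    exact eq_zero_of_eval_zero x hev
  exact ⟨ms, by rwa [hx0] at hlim⟩

/-- `‖T δₙ‖ → 0` ⟹ the uniform bound `sup |φ| ≤ r < 1`. -/
lemma keyB
    (hT : ∀ n : ℕ, ∀ z : ℂ, ‖z‖ < 1 →
      (∑' k, (T (lp.single 1 n 1)) k * z ^ k) = φ z ^ n)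
    (htd : Tendsto (fun n : ℕ => ‖T (lp.single 1 n 1)‖) atTop (𝓝 0)) :
    ∃ r : ℝ, r < 1 ∧ ∀ z : ℂ, ‖z‖ < 1 → ‖φ z‖ ≤ r := by
  have h1 : ∀ᶠ n : ℕ in atTop, ‖T (lp.single 1 n 1)‖ < 1 :=
    htd.eventually_lt_const one_pos
  obtain ⟨n, hn1, hnlt⟩ := (eventually_ge_atTop 1).and h1 |>.exists
  have hn0 : (n:ℝ) ≠ 0 := by positivity
  refine ⟨‖T (lp.single 1 n 1)‖ ^ (1/(n:ℝ) : ℝ), ?_, ?_⟩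
  · exact Real.rpow_lt_one (norm_nonneg _) hnlt (by positivity)
  · intro z hz
    have hb : ‖φ z‖ ^ n ≤ ‖T (lp.single 1 n 1)‖ := by
      have h2 : ‖φ z ^ n‖ = ‖evL z hz.le (T (lp.single 1 n 1))‖ := by
        rw [evL_apply, hT n z hz]
      rw [← norm_pow, h2]
      exact norm_evL_le _ _ _
    have h3 := Real.rpow_le_rpow (by positivity) hb (by positivity : (0:ℝ) ≤ 1/(n:ℝ))
    rwa [← Real.rpow_natCast (‖φ z‖) n, ← Real.rpow_mul (norm_nonneg _),
      mul_one_div, div_self hn0, Real.rpow_one] at h3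

/-- rank-one operators are compact. -/
lemma rank_one_compact (c : l1N →L[ℂ] ℂ) (v : l1N) :
    IsCompactOperator ⇑(c.smulRight v) := by
  refine ⟨(fun t : ℂ => t • v) '' (closedBall 0 ‖c‖), ?_, ?_⟩
  · exact (isCompact_closedBall 0 ‖c‖).image (continuous_id.smul continuous_const)
  · refine Filter.mem_of_superset (Metric.ball_mem_nhds 0 one_pos) ?_
    intro x hx
    refine ⟨c x, ?_, rfl⟩
    rw [mem_closedBall_zero_iff]
    calc ‖c x‖ ≤ ‖c‖ * ‖x‖ := c.le_opNorm x
      _ ≤ ‖c‖ * 1 := by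
          have := (mem_ball_zero_iff.mp hx).le
          exact mul_le_mul_of_nonneg_left this (norm_nonneg c)
      _ = ‖c‖ := mul_one _

lemma sum_compact {ι : Type*} (s : Finset ι) (f : ι → (l1N →L[ℂ] l1N))
    (h : ∀ i ∈ s, IsCompactOperator ⇑(f i)) :
    IsCompactOperator ⇑(∑ i ∈ s, f i) := by
  induction s using Finset.cons_induction with
  | empty => simpa using (isCompactOperator_zero : IsCompactOperator (fun _ : l1N => (0:l1N)))
  | cons i s hi IH =>
    rw [Finset.sum_cons]
    have h1 : IsCompactOperator ⇑(f i) := h i (Finset.mem_cons_self i s)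
    have h2 : IsCompactOperator ⇑(∑ j ∈ s, f j) := IH fun j hj => h j (Finset.mem_cons_of_mem hj)
    have := h1.add h2
    have he : ⇑(f i + ∑ j ∈ s, f j) = ⇑(f i) + ⇑(∑ j ∈ s, f j) := rfl
    rw [he]
    exact this

/-- coordinate functional on `ℓ¹`. -/
def coordL (n : ℕ) : l1N →L[ℂ] ℂ :=
  LinearMap.mkContinuous
    { toFun := fun a => a n
      map_add' := fun a b => by
        show ((a + b : l1N) n) = a n + b n
        rw [lp.coeFn_add]; rfl
      map_smul' := fun c a => by
        show ((c • a : l1N) n) = c * a n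
        rw [lp.coeFn_smul]; rfl }
    1 (fun a => by simpa using lp.norm_apply_le_norm (by norm_num) a n)

lemma coordL_apply (n : ℕ) (a : l1N) : coordL n a = a n := rfl

lemma hasSum_T_apply (T : l1N →L[ℂ] l1N) (a : l1N) :
    HasSum (fun n => a n • T (lp.single 1 n 1)) (T a) := by
  have h1 : HasSum (fun n => lp.single 1 n (a n)) a :=
    lp.hasSum_single (by norm_num) a
  have h2 := h1.map T T.continuous
  have he : ∀ n, T (lp.single 1 n (a n)) = a n • T (lp.single 1 n 1) := by
    intro n
    have hs : lp.single 1 n (a n) = a n • (lp.single 1 n (1:ℂ) : l1N) := by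
      apply lp.ext
      funext k
      rw [lp.coeFn_smul]
      by_cases hk : k = n
      · subst hk
        simp [lp.single_apply_self]
      · simp [lp.single_apply_ne (E := fun _ : ℕ => ℂ) 1 n _ hk, Pi.single_apply, hk]
    rw [hs, map_smul]
  simpa [Function.comp_def, he] using h2

/-- `‖T δₙ‖ → 0` ⟹ compact. -/
lemma keyD (htd : Tendsto (fun n : ℕ => ‖T (lp.single 1 n 1)‖) atTop (𝓝 0)) :
    IsCompactOperator ⇑T := by
  set Tk : ℕ → (l1N →L[ℂ] l1N) :=
    fun k => ∑ n ∈ Finset.range k, (coordL n).smulRight (T (lp.single 1 n 1)) with hTk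
  have hcomp : ∀ k, IsCompactOperator ⇑(Tk k) := by
    intro k
    exact sum_compact _ _ fun i _ => rank_one_compact _ _
  have hbound : ∀ (ε : ℝ), 0 ≤ ε → ∀ k, (∀ n, k ≤ n → ‖T (lp.single 1 n 1)‖ ≤ ε) →
      ‖T - Tk k‖ ≤ ε := by
    intro ε hε k hk
    refine ContinuousLinearMap.opNorm_le_bound _ hε fun a => ?_
    have hTa := hasSum_T_apply T a
    have hTka : (Tk k) a = ∑ n ∈ Finset.range k, a n • T (lp.single 1 n 1) := by
      rw [hTk]
      simp [ContinuousLinearMap.sum_apply, ContinuousLinearMap.smulRight_apply, coordL_apply]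
    have hsplit := Summable.sum_add_tsum_nat_add (f := fun n => a n • T (lp.single 1 n 1)) k hTa.summable
    have hdiff : (T - Tk k) a = ∑' n, a (n + k) • T (lp.single 1 (n + k) 1) := by
      rw [ContinuousLinearMap.sub_apply, hTka, ← hTa.tsum_eq, ← hsplit]
      exact add_sub_cancel_left _ _
    rw [hdiff]
    have hsum2 : Summable fun n => ‖a (n + k)‖ * ε :=
      (((summable_nat_add_iff k).mpr (summable_coe a)).mul_right ε)
    have hterm : ∀ n, ‖a (n + k) • T (lp.single 1 (n + k) 1)‖ ≤ ‖a (n + k)‖ * ε := by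
      intro n
      rw [norm_smul]
      exact mul_le_mul_of_nonneg_left (hk _ (by omega)) (norm_nonneg _)
    have hsum1n : Summable fun n => ‖a (n + k) • T (lp.single 1 (n + k) 1)‖ :=
      Summable.of_nonneg_of_le (fun n => norm_nonneg _) hterm hsum2
    refine (norm_tsum_le_tsum_norm hsum1n).trans ?_
    refine (Summable.tsum_le_tsum hterm hsum1n hsum2).trans ?_
    rw [tsum_mul_right]
    rw [mul_comm]
    refine mul_le_mul_of_nonneg_left ?_ hε
    have hsplit2 := Summable.sum_add_tsum_nat_add (f := fun n => ‖a n‖) k (summable_coe a)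
    have hhead : 0 ≤ ∑ n ∈ Finset.range k, ‖a n‖ :=
      Finset.sum_nonneg fun _ _ => norm_nonneg _
    rw [norm_eq]
    linarith
  have htend : Tendsto Tk atTop (𝓝 T) := by
    rw [Metric.tendsto_atTop]
    intro ε hε
    have h1 : ∀ᶠ n : ℕ in atTop, ‖T (lp.single 1 n 1)‖ < ε / 2 :=
      htd.eventually_lt_const (by positivity)
    obtain ⟨N, hN⟩ := eventually_atTop.mp h1
    refine ⟨N, fun k hkN => ?_⟩
    have hb := hbound (ε/2) (by positivity) k (fun n hn => (hN n (le_trans hkN hn)).le)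
    rw [dist_eq_norm, ← norm_neg, neg_sub]
    linarith
  exact isCompactOperator_of_tendsto htend (Eventually.of_forall hcomp)

end Keys

end S0

/-- Proposition 2.1.  Let `φ : 𝔻 → 𝔻` be a non-constant analytic
function belonging to `A⁺(𝕋)` such that the composition operator `C_φ : f ↦ f ∘ φ` maps
`A⁺(𝕋)` into itself; `T` is `C_φ` read through coefficient sequences.  Then `C_φ` is a
compact operator iff `sup_{z ∈ 𝔻} |φ z| < 1`; equivalently, iff
`‖φⁿ‖_{A⁺(𝕋)} = ‖T δₙ‖ → 0` as `n → ∞` (where `δₙ` is the coefficient sequence of `zⁿ`). -/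
theorem statement_0 (φ : ℂ → ℂ)
    (hanal : DifferentiableOn ℂ φ (ball (0 : ℂ) 1))
    (hmaps : ∀ z ∈ ball (0 : ℂ) 1, φ z ∈ ball (0 : ℂ) 1)
    (hnc : ∃ z w, z ∈ ball (0 : ℂ) 1 ∧ w ∈ ball (0 : ℂ) 1 ∧ φ z ≠ φ w)
    (hφmem : ∃ p : ℕ → ℂ, Summable (fun n : ℕ => ‖p n‖) ∧
      ∀ z ∈ ball (0 : ℂ) 1, HasSum (fun n : ℕ => p n * z ^ n) (φ z))
    (T : l1N →L[ℂ] l1N)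
    (hT : ∀ (a : l1N), ∀ z ∈ ball (0 : ℂ) 1,
      ∑' n : ℕ, (T a) n * z ^ n = ∑' n : ℕ, a n * (φ z) ^ n) :
    (IsCompactOperator ⇑T ↔
      ∃ r : ℝ, r < 1 ∧ ∀ z ∈ ball (0 : ℂ) 1, ‖φ z‖ ≤ r) ∧
    (IsCompactOperator ⇑T ↔
      Tendsto (fun n : ℕ => ‖T (lp.single 1 n (1 : ℂ))‖) atTop (nhds 0)) := by
  obtain ⟨p, hpsum, hphas⟩ := hφmem
  have hp : Summable fun n => ‖p n‖ := by
    simpa using hpsum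
  have hsum : ∀ z : ℂ, ‖z‖ < 1 → HasSum (fun n => p n * z ^ n) (φ z) := fun z hz =>
    hphas z (mem_ball_zero_iff.mpr hz)
  have hmaps' : ∀ z : ℂ, ‖z‖ < 1 → ‖φ z‖ < 1 := fun z hz =>
    mem_ball_zero_iff.mp (hmaps z (mem_ball_zero_iff.mpr hz))
  have hTev : ∀ n : ℕ, ∀ z : ℂ, ‖z‖ < 1 →
      (∑' k, (T (lp.single 1 n 1)) k * z ^ k) = φ z ^ n := by
    intro n z hz
    rw [hT (lp.single 1 n 1) z (mem_ball_zero_iff.mpr hz), S0.eval_single n 1 (φ z), one_mul]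
  have himp1 : Tendsto (fun n : ℕ => ‖T (lp.single 1 n (1 : ℂ))‖) atTop (𝓝 0) →
      IsCompactOperator ⇑T := S0.keyD
  have himp2 : IsCompactOperator ⇑T →
      Tendsto (fun n : ℕ => ‖T (lp.single 1 n (1 : ℂ))‖) atTop (𝓝 0) :=
    S0.keyA hmaps' hTev
  have himp3 : Tendsto (fun n : ℕ => ‖T (lp.single 1 n (1 : ℂ))‖) atTop (𝓝 0) →
      ∃ r : ℝ, r < 1 ∧ ∀ z ∈ ball (0 : ℂ) 1, ‖φ z‖ ≤ r := by
    intro htd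
    obtain ⟨r, hr1, hrb⟩ := S0.keyB hTev htd
    exact ⟨r, hr1, fun z hz => by
      exact hrb z (mem_ball_zero_iff.mp hz)⟩
  have himp4 : (∃ r : ℝ, r < 1 ∧ ∀ z ∈ ball (0 : ℂ) 1, ‖φ z‖ ≤ r) →
      Tendsto (fun n : ℕ => ‖T (lp.single 1 n (1 : ℂ))‖) atTop (𝓝 0) := by
    intro h
    obtain ⟨r, hr1, hrb⟩ := h
    have hrb' : ∀ z : ℂ, ‖z‖ < 1 → ‖φ z‖ ≤ r := fun z hz => by
      exact hrb z (mem_ball_zero_iff.mpr hz)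
    have hr0 : 0 ≤ r :=
      le_trans (norm_nonneg (φ 0)) (hrb' 0 (by norm_num))
    exact S0.keyC hp hsum hr0 hr1 hrb' T hTev
  exact ⟨⟨fun hc => himp3 (himp2 hc), fun h => himp1 (himp4 h)⟩, ⟨himp2, himp1⟩⟩
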